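/- Let k, l be integers with k ≤ 0 and l ≤ 1, and define brackets on formal symbols by [H^k_{m,-2}, H^l_{n,-1}] = -(κ/4)(n(2-k) - m(2-l)) · ( ((2-k)/2-m+(2-l)/2-n-1)! ((2-k)/2+m+(2-l)/2+n-1)! ) / ( ((2-k)/2-m)! ((2-l)/2-n)! ((2-k)/2+m)! ((2-l)/2+n)! ) · H^{k+l}_{m+n,-2}. With w^p_{m,-2} := (1/κ)(p-m-1)!(p+m-1)! H^{-2p+4}_{m,-2} and w^q_{n,-1} := (1/κ)(q-n-1)!(q+n-1)! H^{-2q+4}_{n,-1}, one has [w^p_{m,-2}, w^q_{n,-1}] = (1/2)(m(q-1) - n(p-1)) · w^{p+q-2}_{m+n,-2}. -/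

import Mathlib

/-- The one-loop (double-pole) analogue: the scalar identity converting
`[H^k_{m,-2}, H^l_{n,-1}] = -(κ/4)(n(2-k)-m(2-l)) · (factorial factors) · H^{k+l}_{m+n,-2}`
into `[w^p_{m,-2}, w^q_{n,-1}] = (1/2)(m(q-1)-n(p-1)) w^{p+q-2}_{m+n,-2}` under
`w^p_{m,-2} = (1/κ)(p-m-1)!(p+m-1)! H^{-2p+4}_{m,-2}` and similarly for `-1` modes.
Wedge conditions are encoded by `A = p-m-1`, `B = p+m-1`, `C = q-n-1`, `D = q+n-1 : ℕ`. -/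
theorem stmt19 (κ : ℂ) (hκ : κ ≠ 0) (k l : ℤ) (hk0 : k ≤ 0) (hl1 : l ≤ 1)
    (p q m n : ℂ) (A B C D : ℕ)
    (hA : p - m - 1 = (A : ℂ)) (hB : p + m - 1 = (B : ℂ))
    (hC : q - n - 1 = (C : ℂ)) (hD : q + n - 1 = (D : ℂ))
    (hk : (k : ℂ) = -2 * p + 4) (hl : (l : ℂ) = -2 * q + 4)
    (hAC : 1 ≤ A + C) (hBD : 1 ≤ B + D) :
    ((1 / κ) * (Nat.factorial A : ℂ) * (Nat.factorial B : ℂ)) *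
        ((1 / κ) * (Nat.factorial C : ℂ) * (Nat.factorial D : ℂ)) *
        (-(κ / 4) * (n * (2 - (k : ℂ)) - m * (2 - (l : ℂ))) *
          ((Nat.factorial (A + C - 1) : ℂ) * (Nat.factorial (B + D - 1) : ℂ)) /
          ((Nat.factorial A : ℂ) * (Nat.factorial C : ℂ) *
            (Nat.factorial B : ℂ) * (Nat.factorial D : ℂ))) =
      (1 / 2) * (m * (q - 1) - n * (p - 1)) *
        ((1 / κ) * (Nat.factorial (A + C - 1) : ℂ) * (Nat.factorial (B + D - 1) : ℂ)) := by
  have fA : (Nat.factorial A : ℂ) ≠ 0 := Nat.cast_ne_zero.2 (Nat.factorial_ne_zero A)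
  have fB : (Nat.factorial B : ℂ) ≠ 0 := Nat.cast_ne_zero.2 (Nat.factorial_ne_zero B)
  have fC : (Nat.factorial C : ℂ) ≠ 0 := Nat.cast_ne_zero.2 (Nat.factorial_ne_zero C)
  have fD : (Nat.factorial D : ℂ) ≠ 0 := Nat.cast_ne_zero.2 (Nat.factorial_ne_zero D)
  rw [hk, hl]
  field_simp
  ring
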